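/- Let d ≥ 2 and let C be a full critical collection for σ_d (pairwise unlinked critical chords such that on the boundary circle points of each complementary component of the disk, σ_d is injective apart from identifying endpoints of critical edges). Then C contains a critical chord whose endpoints bound a circle arc of length exactly 1/d. -/

import Mathlib

noncomputable section

/-- The circle `ℝ/ℤ`. -/
abbrev S1 := AddCircle (1 : ℝ)

/-- The `d`-tupling map `σ_d(t) = d·t` on the circle. -/
def sig (d : ℕ) (x : S1) : S1 := d • x

/-- `StrictArc a b c` : `b` lies strictly inside the positively oriented open arc from `a` to `c`. -/
def StrictArc (a b c : S1) : Prop :=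
  ∃ x y z : ℝ, (x : S1) = a ∧ (y : S1) = b ∧ (z : S1) = c ∧ x < y ∧ y < z ∧ z < x + 1

/-- Two chords (given by ordered pairs of endpoints) are linked (cross): their endpoints
alternate on the circle. -/
def Linked (p q : S1 × S1) : Prop :=
  (StrictArc p.1 q.1 p.2 ∧ StrictArc p.2 q.2 p.1) ∨ (StrictArc p.1 q.2 p.2 ∧ StrictArc p.2 q.1 p.1)

/-- Two chords are disjoint: they share no endpoint and are not linked. -/
def ChordDisj (p q : S1 × S1) : Prop :=
  p.1 ≠ q.1 ∧ p.1 ≠ q.2 ∧ p.2 ≠ q.1 ∧ p.2 ≠ q.2 ∧ ¬ Linked p q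

/-- The σ_d-image of a chord, as the (unordered) set of images of the endpoints. -/
def chordIm (d : ℕ) (p : S1 × S1) : Set S1 := {sig d p.1, sig d p.2}
def circleMap1 : ℝ → ℂ := fun x => Complex.exp (2 * Real.pi * Complex.I * (x : ℂ))

theorem circleMap1_periodic : Function.Periodic circleMap1 1 := by
  intro x
  unfold circleMap1
  push_cast
  rw [mul_add, Complex.exp_add, mul_one, Complex.exp_two_pi_mul_I, mul_one]

/-- The standard embedding of the circle `ℝ/ℤ` into the plane (unit circle in `ℂ`). -/
def toC : S1 → ℂ := circleMap1_periodic.lift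

/-- The chord with endpoints `p.1, p.2`, realized as a straight segment in the closed disk. -/
def chordSeg (p : S1 × S1) : Set ℂ := segment ℝ (toC p.1) (toC p.2)

/- ===== auxiliary lemmas ===== -/
open scoped Topology

lemma abs_circleMap1 (t : ℝ) : ‖circleMap1 t‖ = 1 := by
  have h : 2 * Real.pi * Complex.I * (t : ℂ) = ((2 * Real.pi * t : ℝ) : ℂ) * Complex.I := by
    push_cast; ring
  rw [circleMap1, h, Complex.norm_exp_ofReal_mul_I]

lemma continuous_circleMap1 : Continuous circleMap1 := by
  unfold circleMap1; fun_prop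

lemma s1_coe_eq_iff (a b : ℝ) : ((a : S1) = (b : S1)) ↔ ∃ n : ℤ, b - a = n := by
  rw [eq_comm, QuotientAddGroup.eq_iff_sub_mem, AddSubgroup.mem_zmultiples_iff]
  constructor
  · rintro ⟨n, hn⟩; exact ⟨n, by simpa using hn.symm⟩
  · rintro ⟨n, hn⟩; exact ⟨n, by simp [hn]⟩

lemma circleMap1_inj {a b : ℝ} (h : circleMap1 a = circleMap1 b) : (a : S1) = (b : S1) := by
  rw [circleMap1, circleMap1, Complex.exp_eq_exp_iff_exists_int] at h
  obtain ⟨n, hn⟩ := h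
  rw [s1_coe_eq_iff]
  refine ⟨-n, ?_⟩
  have hπ : (2 * (Real.pi:ℂ) * Complex.I) ≠ 0 := by
    simp [Real.pi_ne_zero, Complex.I_ne_zero]
  have h2 : (2 * (Real.pi:ℂ) * Complex.I) * (a:ℂ)
      = (2 * (Real.pi:ℂ) * Complex.I) * ((b:ℂ) + n) := by
    linear_combination hn
  have h3 : (a:ℂ) = (b:ℂ) + n := mul_left_cancel₀ hπ h2
  have h4 : a = b + n := by exact_mod_cast h3
  push_cast
  linarith

lemma toC_coe (t : ℝ) : toC (t : S1) = circleMap1 t := Function.Periodic.lift_coe _ _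

lemma toC_inj {x y : S1} (h : toC x = toC y) : x = y := by
  induction x using QuotientAddGroup.induction_on
  induction y using QuotientAddGroup.induction_on
  rw [toC_coe, toC_coe] at h
  exact circleMap1_inj h

lemma abs_toC (x : S1) : ‖toC x‖ = 1 := by
  induction x using QuotientAddGroup.induction_on
  rw [toC_coe]; exact abs_circleMap1 _

lemma s1_coe_add_one (a : ℝ) : ((a + 1 : ℝ) : S1) = (a : S1) := by
  rw [eq_comm, s1_coe_eq_iff]
  exact ⟨1, by push_cast; ring⟩

lemma s1_coe_ne {a b : ℝ} (h0 : 0 < b - a) (h1 : b - a < 1) : (a : S1) ≠ (b : S1) := by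
  intro h
  rw [s1_coe_eq_iff] at h
  obtain ⟨n, hn⟩ := h
  have h2 : (0:ℤ) < n := by exact_mod_cast hn ▸ h0
  have h3 : (n:ℤ) < 1 := by exact_mod_cast hn ▸ h1
  omega

lemma sig_coe (d : ℕ) (t : ℝ) : sig d ((t:ℝ) : S1) = ((d * t : ℝ) : S1) := by
  show d • ((t:ℝ) : S1) = _
  rw [← AddCircle.coe_nsmul]
  norm_num [nsmul_eq_mul]

lemma sig_shift (d : ℕ) (hd : 0 < d) (t : ℝ) :
    sig d ((t + 1/d : ℝ) : S1) = sig d ((t:ℝ) : S1) := by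
  rw [sig_coe, sig_coe]
  have h : (d:ℝ) * (t + 1/d) = d * t + 1 := by
    have : (d:ℝ) ≠ 0 := by positivity
    field_simp
  rw [h, s1_coe_add_one]

lemma seg_est (a b w : ℂ) (ha : ‖a‖ = 1) (hb : ‖b‖ = 1)
    (hw : w ∈ segment ℝ a b) :
    min (dist w a) (dist w b) * dist a b ≤ 2 * (1 - ‖w‖ ^ 2) := by
  obtain ⟨t, u, ht, hu, htu, hw⟩ := hw
  have ht' : t = 1 - u := by linarith
  subst ht'
  have hwa : w - a = u • (b - a) := by
    rw [← hw]; rw [smul_sub]; module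
  have hwb : w - b = (1-u) • (a - b) := by
    rw [← hw]; rw [smul_sub]; module
  have h1 : dist w a = u * dist a b := by
    rw [dist_eq_norm, dist_eq_norm, hwa, norm_smul, Real.norm_of_nonneg hu, norm_sub_rev]
  have h2 : dist w b = (1-u) * dist a b := by
    rw [dist_eq_norm, dist_eq_norm, hwb, norm_smul, Real.norm_of_nonneg ht]
  have hna : a.re^2 + a.im^2 = 1 := by
    have h' : Complex.normSq a = 1 := by rw [← Complex.sq_norm, ha]; norm_num
    rw [Complex.normSq_apply] at h'; nlinarith [h']
  have hnb : b.re^2 + b.im^2 = 1 := by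
    have h' : Complex.normSq b = 1 := by rw [← Complex.sq_norm, hb]; norm_num
    rw [Complex.normSq_apply] at h'; nlinarith [h']
  have hwre : w.re = (1-u) * a.re + u * b.re := by
    rw [← hw]; simp [Complex.add_re, Complex.smul_re]
  have hwim : w.im = (1-u) * a.im + u * b.im := by
    rw [← hw]; simp [Complex.add_im, Complex.smul_im]
  have h3 : 1 - ‖w‖ ^ 2 = (1-u) * u * (dist a b)^2 := by
    rw [Complex.sq_norm, Complex.normSq_apply, dist_eq_norm,
      Complex.sq_norm, Complex.normSq_apply, Complex.sub_re, Complex.sub_im, hwre, hwim]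
    nlinarith [hna, hnb]
  rw [h1, h2, h3]
  have hd : 0 ≤ dist a b := dist_nonneg
  rcases le_total u (1-u) with h | h
  · rw [min_eq_left (by nlinarith)]
    nlinarith [mul_nonneg (mul_nonneg hu (sub_nonneg.2 h)) (mul_nonneg hd hd)]
  · rw [min_eq_right (by nlinarith)]
    nlinarith [mul_nonneg (mul_nonneg ht (sub_nonneg.2 h)) (mul_nonneg hd hd)]

lemma no_free_arc (d : ℕ) (hd : 2 ≤ d) (C : Finset (S1 × S1))
    (hcrit : ∀ p ∈ C, p.1 ≠ p.2 ∧ sig d p.1 = sig d p.2)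
    (hfull : ∀ z ∈ Metric.ball (0 : ℂ) 1 \ ⋃ p ∈ C, chordSeg p,
      ∀ x y : S1,
        toC x ∈ closure (connectedComponentIn (Metric.ball (0 : ℂ) 1 \ ⋃ p ∈ C, chordSeg p) z) →
        toC y ∈ closure (connectedComponentIn (Metric.ball (0 : ℂ) 1 \ ⋃ p ∈ C, chordSeg p) z) →
        sig d x = sig d y →
        x = y ∨ ((∃ p ∈ C, x = p.1 ∨ x = p.2) ∧ ∃ p ∈ C, y = p.1 ∨ y = p.2))
    (t₀ : ℝ)
    (havoid : ∀ t ∈ Set.Icc t₀ (t₀ + 1/(d:ℝ)), ∀ q ∈ C, ((t:ℝ):S1) ≠ q.1 ∧ ((t:ℝ):S1) ≠ q.2) :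
    False := by
  have hd0 : (0:ℝ) < d := by positivity
  have hdi0 : (0:ℝ) < 1/(d:ℝ) := by positivity
  have hdi1 : (1:ℝ)/(d:ℝ) < 1 := by
    rw [div_lt_one hd0]; exact_mod_cast hd
  set U : Set ℂ := Metric.ball (0 : ℂ) 1 \ ⋃ p ∈ C, chordSeg p with hU
  -- the arc
  set A : Set ℂ := circleMap1 '' Set.Icc t₀ (t₀ + 1/(d:ℝ)) with hA
  have hAcp : IsCompact A := (isCompact_Icc).image continuous_circleMap1
  have hAne : A.Nonempty := ⟨circleMap1 t₀, t₀, ⟨le_refl _, by linarith⟩, rfl⟩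
  -- endpoints
  set E : Finset ℂ :=
    insert 2 ((C.image fun p => toC p.1) ∪ (C.image fun p => toC p.2)) with hE
  have hAE : ∀ w ∈ A, w ∉ (E : Set ℂ) := by
    rintro w ⟨t, ht, rfl⟩ hw
    simp only [hE, Finset.coe_insert, Set.mem_insert_iff, Finset.coe_union,
      Set.mem_union, Finset.coe_image, Set.mem_image, Finset.mem_coe] at hw
    rcases hw with hw | ⟨p, hp, hw⟩ | ⟨p, hp, hw⟩
    · have := abs_circleMap1 t
      rw [hw] at this
      norm_num at this
    · have : ((t:ℝ) : S1) = p.1 := toC_inj (by rw [toC_coe]; exact hw.symm)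
      exact (havoid t ht p hp).1 this
    · have : ((t:ℝ) : S1) = p.2 := toC_inj (by rw [toC_coe]; exact hw.symm)
      exact (havoid t ht p hp).2 this
  -- the distance ε
  have hEne : (E : Set ℂ).Nonempty := ⟨2, by simp [hE]⟩
  have hEcl : IsClosed (E : Set ℂ) := (E.finite_toSet).isClosed
  obtain ⟨w₀, hw₀A, hw₀min⟩ :=
    hAcp.exists_isMinOn hAne (Metric.continuous_infDist_pt (E : Set ℂ)).continuousOn
  set ε : ℝ := Metric.infDist w₀ (E : Set ℂ) with hεdef
  have hε : 0 < ε := (hEcl.notMem_iff_infDist_pos hEne).1 (hAE w₀ hw₀A)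
  have hεle : ∀ w ∈ A, ∀ e ∈ (E : Set ℂ), ε ≤ dist w e := by
    intro w hw e he
    exact le_trans (hw₀min hw) (Metric.infDist_le_dist_of_mem he)
  -- choose r
  have hev : ∀ᶠ r in 𝓝[<] (1:ℝ),
      (0 < r ∧ 1 - r < ε/2 ∧ ∀ p ∈ C, 2*(1-r^2) < ε/2 * dist (toC p.1) (toC p.2)) := by
    have h1 : ∀ᶠ r in 𝓝 (1:ℝ), 0 < r := eventually_gt_nhds (by norm_num)
    have h2 : ∀ᶠ r in 𝓝 (1:ℝ), 1 - r < ε/2 := by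
      have : Filter.Tendsto (fun r : ℝ => 1 - r) (𝓝 1) (𝓝 0) := by
        have := Filter.Tendsto.const_sub (1:ℝ) (continuous_id.tendsto (1:ℝ))
        simpa using this
      exact this.eventually_lt_const (by positivity)
    have h3 : ∀ᶠ r in 𝓝 (1:ℝ), ∀ p ∈ C, 2*(1-r^2) < ε/2 * dist (toC p.1) (toC p.2) := by
      rw [Filter.eventually_all_finset]
      intro p hp
      have hne : toC p.1 ≠ toC p.2 := fun h => (hcrit p hp).1 (toC_inj h)
      have hpos : 0 < ε/2 * dist (toC p.1) (toC p.2) := by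
        have := dist_pos.2 hne; positivity
      have : Filter.Tendsto (fun r : ℝ => 2*(1-r^2)) (𝓝 1) (𝓝 0) := by
        have h := Filter.Tendsto.const_mul (2:ℝ)
          (Filter.Tendsto.const_sub (1:ℝ) ((continuous_pow 2).tendsto (1:ℝ)))
        norm_num at h
        simpa using h
      exact this.eventually_lt_const hpos
    exact Filter.Eventually.filter_mono nhdsWithin_le_nhds ((h1.and h2).and h3 |>.mono (by tauto))
  obtain ⟨r, ⟨hr0, hrε, hrC⟩, hr1⟩ := (hev.and eventually_mem_nhdsWithin).exists
  rw [Set.mem_Iio] at hr1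
  -- the collar set K
  set g : ℝ × ℝ → ℂ := fun q => (q.1 : ℂ) * circleMap1 q.2 with hg
  have hgcont : Continuous g :=
    (Complex.continuous_ofReal.comp continuous_fst).mul
      (continuous_circleMap1.comp continuous_snd)
  set K : Set ℂ := g '' (Set.Ioo r 1 ×ˢ Set.Icc t₀ (t₀ + 1/(d:ℝ))) with hK
  have habs : ∀ s t : ℝ, 0 ≤ s → ‖(s:ℂ) * circleMap1 t‖ = s := by
    intro s t hs
    rw [norm_mul, Complex.norm_real, abs_circleMap1, Real.norm_of_nonneg hs, mul_one]
  have hKU : K ⊆ U := by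
    rintro w ⟨⟨s, t⟩, ⟨hs, ht⟩, rfl⟩
    simp only [Set.mem_Ioo] at hs
    have hs0 : 0 < s := lt_trans hr0 hs.1
    constructor
    · rw [Metric.mem_ball, dist_zero_right, habs s t hs0.le]
      exact hs.2
    · intro hmem
      simp only [Set.mem_iUnion] at hmem
      obtain ⟨p, hp, hwseg⟩ := hmem
      have hne : toC p.1 ≠ toC p.2 := fun h => (hcrit p hp).1 (toC_inj h)
      have hDpos : 0 < dist (toC p.1) (toC p.2) := dist_pos.2 hne
      have hest := seg_est (toC p.1) (toC p.2) (g (s, t)) (abs_toC _) (abs_toC _) hwseg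
      rw [show ‖g (s,t)‖ = s from habs s t hs0.le] at hest
      have h2 : 2*(1 - s^2) < ε/2 * dist (toC p.1) (toC p.2) := by
        have := hrC p hp
        nlinarith [hs.1, hr0]
      have hmm : min (dist (g (s,t)) (toC p.1)) (dist (g (s,t)) (toC p.2))
          * dist (toC p.1) (toC p.2) < ε/2 * dist (toC p.1) (toC p.2) :=
        lt_of_le_of_lt hest h2
      have hmin : min (dist (g (s,t)) (toC p.1)) (dist (g (s,t)) (toC p.2)) < ε/2 :=
        lt_of_mul_lt_mul_right hmm dist_nonneg
      have hdc : dist (g (s,t)) (circleMap1 t) < ε/2 := by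
        have heq : g (s,t) - circleMap1 t = ((s - 1 : ℝ):ℂ) * circleMap1 t := by
          simp only [hg]; push_cast; ring
        rw [dist_eq_norm, heq, norm_mul, Complex.norm_real, Real.norm_eq_abs,
          abs_circleMap1, mul_one, abs_of_nonpos (by linarith)]
        linarith
      have htA : circleMap1 t ∈ A := ⟨t, ht, rfl⟩
      rcases min_lt_iff.1 hmin with h | h
      · have he1 : toC p.1 ∈ (E : Set ℂ) := by
          simp only [hE, Finset.coe_insert, Set.mem_insert_iff, Finset.coe_union,
            Set.mem_union, Finset.coe_image, Set.mem_image, Finset.mem_coe]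
          exact Or.inr (Or.inl ⟨p, hp, rfl⟩)
        have := hεle _ htA _ he1
        have : dist (circleMap1 t) (toC p.1) < ε := by
          calc dist (circleMap1 t) (toC p.1)
              ≤ dist (circleMap1 t) (g (s,t)) + dist (g (s,t)) (toC p.1) := dist_triangle _ _ _
            _ < ε/2 + ε/2 := by rw [dist_comm (circleMap1 t)]; exact add_lt_add hdc h
            _ = ε := by ring
        linarith [hεle _ htA _ he1]
      · have he2 : toC p.2 ∈ (E : Set ℂ) := by
          simp only [hE, Finset.coe_insert, Set.mem_insert_iff, Finset.coe_union,
            Set.mem_union, Finset.coe_image, Set.mem_image, Finset.mem_coe]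
          exact Or.inr (Or.inr ⟨p, hp, rfl⟩)
        have : dist (circleMap1 t) (toC p.2) < ε := by
          calc dist (circleMap1 t) (toC p.2)
              ≤ dist (circleMap1 t) (g (s,t)) + dist (g (s,t)) (toC p.2) := dist_triangle _ _ _
            _ < ε/2 + ε/2 := by rw [dist_comm (circleMap1 t)]; exact add_lt_add hdc h
            _ = ε := by ring
        linarith [hεle _ htA _ he2]
  have hKconn : IsPreconnected K :=
    (((convex_Ioo r 1).prod (convex_Icc t₀ (t₀ + 1/(d:ℝ)))).isPreconnected).image g
      hgcont.continuousOn
  have hmid : (r+1)/2 ∈ Set.Ioo r (1:ℝ) := ⟨by linarith, by linarith⟩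
  set z : ℂ := g ((r+1)/2, t₀) with hz
  have hzK : z ∈ K := ⟨((r+1)/2, t₀), ⟨hmid, ⟨le_refl _, by linarith⟩⟩, rfl⟩
  have hKcc : K ⊆ connectedComponentIn U z :=
    hKconn.subset_connectedComponentIn hzK hKU
  have hclo : closure K ⊆ closure (connectedComponentIn U z) := closure_mono hKcc
  haveI hnb : (𝓝[Set.Ioo r 1] (1:ℝ)).NeBot := by
    apply mem_closure_iff_nhdsWithin_neBot.1
    rw [closure_Ioo (ne_of_lt hr1)]
    exact ⟨le_of_lt hr1, le_refl _⟩
  have hlim : ∀ t : ℝ, t ∈ Set.Icc t₀ (t₀ + 1/(d:ℝ)) → circleMap1 t ∈ closure K := by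
    intro t ht
    apply mem_closure_of_tendsto (f := fun s : ℝ => g (s, t)) (b := 𝓝[Set.Ioo r 1] (1:ℝ))
    · have hc : Filter.Tendsto (fun s : ℝ => g (s, t)) (𝓝 1) (𝓝 (g (1, t))) :=
        (hgcont.comp (continuous_id.prodMk continuous_const)).tendsto 1
      have : g (1, t) = circleMap1 t := by simp [hg]
      rw [this] at hc
      exact hc.mono_left nhdsWithin_le_nhds
    · filter_upwards [self_mem_nhdsWithin] with s hs
      exact ⟨(s, t), ⟨hs, ht⟩, rfl⟩
  have hx : toC ((t₀ : ℝ) : S1) ∈ closure (connectedComponentIn U z) := by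
    rw [toC_coe]; exact hclo (hlim t₀ ⟨le_refl _, by linarith⟩)
  have hy : toC ((t₀ + 1/(d:ℝ) : ℝ) : S1) ∈ closure (connectedComponentIn U z) := by
    rw [toC_coe]; exact hclo (hlim _ ⟨by linarith, le_refl _⟩)
  have hsig : sig d ((t₀ : ℝ) : S1) = sig d ((t₀ + 1/(d:ℝ) : ℝ) : S1) :=
    (sig_shift d (by omega) t₀).symm
  rcases hfull z (hKU hzK) _ _ hx hy hsig with h | ⟨⟨p, hp, hxp⟩, _⟩
  · exact s1_coe_ne (a := t₀) (b := t₀ + 1/(d:ℝ)) (by linarith) (by linarith) h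
  · have := havoid t₀ ⟨le_refl _, by linarith⟩ p hp
    rcases hxp with h | h
    · exact this.1 h
    · exact this.2 h

lemma s1_coe_sub (x y : ℝ) : ((x - y : ℝ) : S1) = ((x:ℝ):S1) - ((y:ℝ):S1) :=
  QuotientAddGroup.mk_sub _ _ _

lemma int_toNat_cast_real (n : ℤ) (h : 0 ≤ n) : ((n.toNat : ℕ) : ℝ) = (n : ℝ) := by
  exact_mod_cast congrArg (Int.cast : ℤ → ℝ) (Int.toNat_of_nonneg h)

lemma chord_data_aux (d : ℕ) (hd : 2 ≤ d) (x y : S1) (a c : ℝ) (hax : ((a:ℝ):S1) = x)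
    (hcy : ((c:ℝ):S1) = y) (hac : a < c) (hc1 : c - a < 1) (n : ℤ)
    (hn : (d:ℝ)*c - (d:ℝ)*a = n) :
    ∃ (u : ℝ) (k : ℕ), 1 ≤ k ∧ (k:ℝ)/d ≤ 1/2 ∧
      ({x, y} : Set S1) = {((u:ℝ):S1), ((u + k/d : ℝ):S1)} := by
  have hd0 : (0:ℝ) < d := by positivity
  have hn0 : (0:ℤ) < n := by
    have : (0:ℝ) < (n:ℝ) := by nlinarith
    exact_mod_cast this
  have hnd : n < (d:ℤ) := by
    have : (n:ℝ) < (d:ℝ) := by nlinarith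
    exact_mod_cast this
  rcases le_or_gt (c - a) (1/2) with h | h
  · refine ⟨a, n.toNat, by omega, ?_, ?_⟩
    · have h1 : ((n.toNat : ℕ) : ℝ) = (n:ℝ) := by
        exact int_toNat_cast_real n hn0.le
      rw [h1, div_le_iff₀ hd0]
      nlinarith
    · have hkd : ((n.toNat : ℕ) : ℝ)/d = c - a := by
        have h1 : ((n.toNat : ℕ) : ℝ) = (n:ℝ) := by
          exact int_toNat_cast_real n hn0.le
        rw [h1]
        field_simp
        linarith
      rw [hkd]
      have : a + (c - a) = c := by ring
      rw [this, hax, hcy]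
  · refine ⟨c, (d - n).toNat, by omega, ?_, ?_⟩
    · have h1 : (((d - n).toNat : ℕ) : ℝ) = (d:ℝ) - (n:ℝ) := by
        rw [int_toNat_cast_real _ (by omega : (0:ℤ) ≤ (d:ℤ) - n)]; push_cast; ring
      rw [h1, div_le_iff₀ hd0]
      nlinarith
    · have h1 : (((d - n).toNat : ℕ) : ℝ)/d = 1 - (c - a) := by
        have h2 : (((d - n).toNat : ℕ) : ℝ) = (d:ℝ) - (n:ℝ) := by
          rw [int_toNat_cast_real _ (by omega : (0:ℤ) ≤ (d:ℤ) - n)]; push_cast; ring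
        rw [h2]
        field_simp
        linarith
      rw [h1]
      have h3 : c + (1 - (c - a)) = a + 1 := by ring
      rw [h3, s1_coe_add_one, hax, hcy, Set.pair_comm]

lemma chord_data (d : ℕ) (hd : 2 ≤ d) (p : S1 × S1) (hne : p.1 ≠ p.2)
    (hsig : sig d p.1 = sig d p.2) :
    ∃ (u : ℝ) (k : ℕ), 1 ≤ k ∧ (k:ℝ)/d ≤ 1/2 ∧
      ({p.1, p.2} : Set S1) = {((u:ℝ):S1), ((u + k/d : ℝ):S1)} := by
  haveI : Fact ((0:ℝ) < 1) := ⟨one_pos⟩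
  obtain ⟨a, ha, hax⟩ := AddCircle.eq_coe_Ico p.1
  obtain ⟨c, hc, hcy⟩ := AddCircle.eq_coe_Ico p.2
  have hac : a ≠ c := by
    rintro rfl
    exact hne (hax ▸ hcy ▸ rfl)
  have hsig' : sig d ((a:ℝ):S1) = sig d ((c:ℝ):S1) := by rw [hax, hcy, hsig]
  rw [sig_coe, sig_coe, s1_coe_eq_iff] at hsig'
  obtain ⟨n, hn⟩ := hsig'
  rcases lt_or_gt_of_ne hac with h | h
  · exact chord_data_aux d hd p.1 p.2 a c hax hcy h
      (by simp only [Set.mem_Ico] at ha hc; linarith [ha.1, hc.2]) n (by linarith)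
  · obtain ⟨u, k, h1, h2, h3⟩ := chord_data_aux d hd p.2 p.1 c a hcy hax h
      (by simp only [Set.mem_Ico] at ha hc; linarith [hc.1, ha.2]) (-n)
      (by push_cast; linarith)
    exact ⟨u, k, h1, h2, by rw [Set.pair_comm]; exact h3⟩

/-- A full critical collection for σ_d — a finite family of distinct pairwise
unlinked critical chords such that, on the circle points of the closure of each connected
component of the complement of the chords in the open disk, σ_d is injective apart from
identifying endpoints of critical edges — contains a critical chord whose endpoints bound
a circle arc of length exactly `1/d`. -/
theorem full_collection_has_short_chord (d : ℕ) (hd : 2 ≤ d)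
    (C : Finset (S1 × S1))
    (hcrit : ∀ p ∈ C, p.1 ≠ p.2 ∧ sig d p.1 = sig d p.2)
    (hdistinct : ∀ p ∈ C, ∀ q ∈ C, p ≠ q → ({p.1, p.2} : Set S1) ≠ {q.1, q.2})
    (hunlinked : ∀ p ∈ C, ∀ q ∈ C, ¬ Linked p q)
    (hfull : ∀ z ∈ Metric.ball (0 : ℂ) 1 \ ⋃ p ∈ C, chordSeg p,
      ∀ x y : S1,
        toC x ∈ closure (connectedComponentIn (Metric.ball (0 : ℂ) 1 \ ⋃ p ∈ C, chordSeg p) z) →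
        toC y ∈ closure (connectedComponentIn (Metric.ball (0 : ℂ) 1 \ ⋃ p ∈ C, chordSeg p) z) →
        sig d x = sig d y →
        x = y ∨ ((∃ p ∈ C, x = p.1 ∨ x = p.2) ∧ ∃ p ∈ C, y = p.1 ∨ y = p.2)) :
    ∃ p ∈ C, p.2 - p.1 = ((1 / (d : ℝ) : ℝ) : S1) ∨ p.1 - p.2 = ((1 / (d : ℝ) : ℝ) : S1) := by
  have hd0 : (0:ℝ) < d := by positivity
  rcases C.eq_empty_or_nonempty with rfl | ⟨p₀, hp₀⟩
  · exact (no_free_arc d hd ∅ hcrit hfull 0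
      (fun t ht q hq => absurd hq (Finset.notMem_empty q))).elim
  set S : Set ℕ := {k | 1 ≤ k ∧ (k:ℝ)/d ≤ 1/2 ∧ ∃ p ∈ C, ∃ u : ℝ,
      ({p.1, p.2} : Set S1) = {((u:ℝ):S1), ((u + k/d : ℝ):S1)}} with hS
  have hSne : S.Nonempty := by
    obtain ⟨u, k, h1, h2, h3⟩ := chord_data d hd p₀ (hcrit p₀ hp₀).1 (hcrit p₀ hp₀).2
    exact ⟨k, h1, h2, p₀, hp₀, u, h3⟩
  obtain ⟨hk₁, hkhalf, p, hp, u, hset⟩ := Nat.sInf_mem hSne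
  set k₀ := sInf S with hk₀
  rcases eq_or_lt_of_le hk₁ with h1 | h2
  · -- k₀ = 1 : the conclusion holds
    have hc : ((k₀:ℕ):ℝ) = 1 := by exact_mod_cast h1.symm
    have harc : u + (k₀:ℝ)/d - u = 1/(d:ℝ) := by rw [hc]; ring
    rcases Set.pair_eq_pair_iff.1 hset with ⟨ha, hb⟩ | ⟨ha, hb⟩
    · refine ⟨p, hp, Or.inl ?_⟩
      rw [ha, hb, ← s1_coe_sub]
      exact congrArg _ harc
    · refine ⟨p, hp, Or.inr ?_⟩
      rw [ha, hb, ← s1_coe_sub]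
      exact congrArg _ harc
  · -- k₀ ≥ 2 : contradiction with fullness
    exfalso
    set l : ℝ := (k₀:ℝ)/d with hl
    have hk2 : (2:ℝ) ≤ (k₀:ℝ) := by exact_mod_cast h2
    have hld : 1/(d:ℝ) < l := by
      rw [hl, div_lt_div_iff_of_pos_right hd0]
      linarith
    have hl2 : l ≤ 1/2 := hkhalf
    have hdi0 : (0:ℝ) < 1/(d:ℝ) := by positivity
    apply no_free_arc d hd C hcrit hfull (u + (l - 1/(d:ℝ))/2)
    intro t ht q hq
    simp only [Set.mem_Icc] at ht
    have hti1 : u < t := by linarith [ht.1]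
    have hti2 : t < u + l := by linarith [ht.2]
    have main : ((t:ℝ):S1) ∉ ({q.1, q.2} : Set S1) := by
      intro htq
      obtain ⟨v, kq, hkq1, hkqhalf, hqset⟩ := chord_data d hd q (hcrit q hq).1 (hcrit q hq).2
      have hkqS : kq ∈ S := ⟨hkq1, hkqhalf, q, hq, v, hqset⟩
      have hmge : l ≤ (kq:ℝ)/d := by
        have h3 : k₀ ≤ kq := Nat.sInf_le hkqS
        have h4 : ((k₀:ℕ):ℝ) ≤ ((kq:ℕ):ℝ) := by exact_mod_cast h3
        rw [hl, div_le_div_iff_of_pos_right hd0]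
        exact h4
      set m : ℝ := (kq:ℝ)/d with hm
      have hm2 : m ≤ 1/2 := hkqhalf
      rw [hqset] at htq
      obtain ⟨s, hs1, hs2, hqs⟩ : ∃ s:ℝ, u + l < s ∧ s < u + 1 ∧
          ({q.1, q.2} : Set S1) = {((t:ℝ):S1), ((s:ℝ):S1)} := by
        rcases htq with h | h
        · refine ⟨t + m, by linarith, by linarith, ?_⟩
          rw [hqset]
          obtain ⟨j, hj⟩ := (s1_coe_eq_iff t v).1 h
          have hvm : ((v + m : ℝ):S1) = ((t + m : ℝ):S1) := by
            rw [s1_coe_eq_iff]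
            exact ⟨-j, by push_cast; linarith⟩
          rw [← h, hvm]
        · refine ⟨t - m + 1, by linarith, by linarith, ?_⟩
          rw [hqset]
          obtain ⟨j, hj⟩ := (s1_coe_eq_iff t (v + m)).1 h
          have hv : ((v : ℝ):S1) = ((t - m + 1 : ℝ):S1) := by
            rw [s1_coe_eq_iff]
            exact ⟨1 - j, by push_cast; linarith⟩
          rw [hv, ← h, Set.pair_comm]
      have hts : ((t:ℝ):S1) ≠ ((s:ℝ):S1) := s1_coe_ne (by linarith) (by linarith)
      have SA1 : StrictArc ((u:ℝ):S1) ((t:ℝ):S1) ((u+l:ℝ):S1) :=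
        ⟨u, t, u+l, rfl, rfl, rfl, hti1, hti2, by linarith⟩
      have SA2 : StrictArc ((u+l:ℝ):S1) ((s:ℝ):S1) ((u:ℝ):S1) :=
        ⟨u+l, s, u+1, rfl, rfl, s1_coe_add_one u, hs1, hs2, by linarith⟩
      apply hunlinked p hp q hq
      unfold Linked
      rcases Set.pair_eq_pair_iff.1 hset with ⟨hp1, hp2⟩ | ⟨hp1, hp2⟩ <;>
        rcases Set.pair_eq_pair_iff.1 hqs with ⟨hq1, hq2⟩ | ⟨hq1, hq2⟩ <;>
        rw [hp1, hp2, hq1, hq2]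
      · exact Or.inl ⟨SA1, SA2⟩
      · exact Or.inr ⟨SA1, SA2⟩
      · exact Or.inr ⟨SA2, SA1⟩
      · exact Or.inl ⟨SA2, SA1⟩
    exact ⟨fun h => main (Or.inl h), fun h => main (Or.inr h)⟩
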